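/- Let $f:\mathbb{R}\to(0,\infty)$ be a $C^2$ function and let $u, v$ be differentiable functions on a connected open set $\Omega \subseteq \mathbb{R}^N$ with $v \neq 0$, such that $f'(v) = 1$ identically on $\Omega$ and $f(v)\nabla u - u f'(v)\nabla v = 0$ on $\Omega$. Then there exist constants $c, d \in \mathbb{R}$ with $u = cv + d$ on $\Omega$; moreover, if $u, v$ are $C^2$, then $f(v)\Delta u = u f'(v)\Delta v$ on $\Omega$. -/

import Mathlib

open MeasureTheory

noncomputable def lap {N : ℕ} (u : EuclideanSpace ℝ (Fin N) → ℝ)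
    (x : EuclideanSpace ℝ (Fin N)) : ℝ :=
  ∑ i : Fin N, fderiv ℝ (fun y => fderiv ℝ u y (EuclideanSpace.single i 1)) x
    (EuclideanSpace.single i 1)

/-- A function with vanishing (global) Fréchet derivative on an open preconnected set
is constant there. -/
lemma aux_const_of_fderiv_zero {E : Type*} [NormedAddCommGroup E] [NormedSpace ℝ E]
    {Ω : Set E} (hΩ : IsOpen Ω) (hconn : IsPreconnected Ω) {g : E → ℝ}
    (hg : ∀ x ∈ Ω, DifferentiableAt ℝ g x) (hg' : ∀ x ∈ Ω, fderiv ℝ g x = 0)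
    {x₀ : E} (hx₀ : x₀ ∈ Ω) : ∀ x ∈ Ω, g x = g x₀ := by
  -- local constancy
  have hloc : ∀ x ∈ Ω, ∃ r > 0, Metric.ball x r ⊆ Ω ∧ ∀ y ∈ Metric.ball x r, g y = g x := by
    intro x hx
    obtain ⟨r, hr, hball⟩ := Metric.isOpen_iff.mp hΩ x hx
    refine ⟨r, hr, hball, fun y hy => ?_⟩
    refine (convex_ball x r).is_const_of_fderivWithin_eq_zero
      (fun z hz => ((hg z (hball hz)).differentiableWithinAt)) (fun z hz => ?_) hy
      (Metric.mem_ball_self hr)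
    rw [fderivWithin_of_isOpen Metric.isOpen_ball hz]
    exact hg' z (hball hz)
  classical
  by_contra hcon
  push_neg at hcon
  obtain ⟨x₁, hx₁, hne⟩ := hcon
  -- T : where g = g x₀ ; U : where g ≠ g x₀
  set T : Set E := {x | x ∈ Ω ∧ g x = g x₀} with hT
  set U : Set E := {x | x ∈ Ω ∧ g x ≠ g x₀} with hU
  have hTopen : IsOpen T := by
    rw [Metric.isOpen_iff]
    intro x hx
    obtain ⟨r, hr, hball, hcst⟩ := hloc x hx.1
    exact ⟨r, hr, fun y hy => ⟨hball hy, (hcst y hy).trans hx.2⟩⟩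
  have hUopen : IsOpen U := by
    rw [Metric.isOpen_iff]
    intro x hx
    obtain ⟨r, hr, hball, hcst⟩ := hloc x hx.1
    exact ⟨r, hr, fun y hy => ⟨hball hy, by rw [hcst y hy]; exact hx.2⟩⟩
  have hsub : Ω ⊆ T ∪ U := by
    intro x hx
    by_cases h : g x = g x₀
    · exact Or.inl ⟨hx, h⟩
    · exact Or.inr ⟨hx, h⟩
  have h1 : (Ω ∩ T).Nonempty := ⟨x₀, hx₀, hx₀, rfl⟩
  have h2 : (Ω ∩ U).Nonempty := ⟨x₁, hx₁, hx₁, hne⟩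
  obtain ⟨z, _, hzT, hzU⟩ := hconn T U hTopen hUopen hsub h1 h2
  exact hzU.2 hzT.2

theorem equality_case_nonlinear_picone {N : ℕ} (Ω : Set (EuclideanSpace ℝ (Fin N)))
    (hΩ : IsOpen Ω) (hconn : IsPreconnected Ω)
    (f : ℝ → ℝ) (hf : ContDiff ℝ 2 f) (hfpos : ∀ y : ℝ, 0 < f y)
    (u v : EuclideanSpace ℝ (Fin N) → ℝ)
    (hu : DifferentiableOn ℝ u Ω) (hv : DifferentiableOn ℝ v Ω)
    (hvne : ∀ x ∈ Ω, v x ≠ 0)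
    (hf1 : ∀ x ∈ Ω, deriv f (v x) = 1)
    (hgrad : ∀ x ∈ Ω,
      f (v x) • gradient u x - (u x * deriv f (v x)) • gradient v x = 0) :
    (∃ c d : ℝ, ∀ x ∈ Ω, u x = c * v x + d) ∧
    (ContDiffOn ℝ 2 u Ω → ContDiffOn ℝ 2 v Ω →
      ∀ x ∈ Ω, f (v x) * lap u x = u x * deriv f (v x) * lap v x) := by
  classical
  rcases Set.eq_empty_or_nonempty Ω with hemp | ⟨x₀, hx₀⟩
  · subst hemp
    exact ⟨⟨0, 0, fun x hx => absurd hx (Set.notMem_empty x)⟩,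
      fun _ _ x hx => absurd hx (Set.notMem_empty x)⟩
  set F : EuclideanSpace ℝ (Fin N) → ℝ := fun x => f (v x) with hFdef
  have hF0 : ∀ x, F x ≠ 0 := fun x => (hfpos (v x)).ne'
  -- differentiability facts at points of Ω
  have hud : ∀ x ∈ Ω, DifferentiableAt ℝ u x :=
    fun x hx => (hu x hx).differentiableAt (hΩ.mem_nhds hx)
  have hvd : ∀ x ∈ Ω, DifferentiableAt ℝ v x :=
    fun x hx => (hv x hx).differentiableAt (hΩ.mem_nhds hx)
  -- F has Fréchet derivative fderiv v at points of Ω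
  have hFd : ∀ x ∈ Ω, HasFDerivAt F (fderiv ℝ v x) x := by
    intro x hx
    have hd : HasDerivAt f (deriv f (v x)) (v x) :=
      ((hf.differentiable two_ne_zero) (v x)).hasDerivAt
    have := hd.comp_hasFDerivAt x (hvd x hx).hasFDerivAt
    rwa [hf1 x hx, one_smul] at this
  -- key pointwise identity on fderiv
  have key : ∀ x ∈ Ω, F x • fderiv ℝ u x = u x • fderiv ℝ v x := by
    intro x hx
    have h := hgrad x hx
    rw [hf1 x hx, mul_one] at h
    simp only [gradient] at h
    have h2 : (InnerProductSpace.toDual ℝ (EuclideanSpace ℝ (Fin N))).symm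
        (F x • fderiv ℝ u x - u x • fderiv ℝ v x) = 0 := by
      rw [map_sub, _root_.map_smul, _root_.map_smul]; exact h
    have h3 : F x • fderiv ℝ u x - u x • fderiv ℝ v x = 0 := by
      simpa using (LinearIsometryEquiv.map_eq_zero_iff _).mp h2
    exact sub_eq_zero.mp h3
  -- the quotient q = u / F has zero derivative on Ω
  set q : EuclideanSpace ℝ (Fin N) → ℝ := fun x => u x * (F x)⁻¹ with hqdef
  have hq0 : ∀ x ∈ Ω, HasFDerivAt q (0 : EuclideanSpace ℝ (Fin N) →L[ℝ] ℝ) x := by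
    intro x hx
    have h1 : HasFDerivAt (fun y => (F y)⁻¹) ((-(F x ^ 2)⁻¹) • fderiv ℝ v x) x :=
      (hasDerivAt_inv (hF0 x)).comp_hasFDerivAt x (hFd x hx)
    have h2 := (hud x hx).hasFDerivAt.mul h1
    have hu' : fderiv ℝ u x = (u x * (F x)⁻¹) • fderiv ℝ v x := by
      have := congrArg (fun L => (F x)⁻¹ • L) (key x hx)
      simpa [smul_smul, inv_mul_cancel₀ (hF0 x), mul_comm] using this
    refine h2.congr_fderiv ?_
    rw [hu']
    match_scalars
    field_simp
    ring
  -- q and F - v are constant on Ω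
  have hqconst : ∀ x ∈ Ω, q x = q x₀ :=
    aux_const_of_fderiv_zero hΩ hconn
      (fun x hx => (hq0 x hx).differentiableAt)
      (fun x hx => (hq0 x hx).fderiv) hx₀
  have hgconst : ∀ x ∈ Ω, F x - v x = F x₀ - v x₀ := by
    refine aux_const_of_fderiv_zero hΩ hconn (g := fun x => F x - v x)
      (fun x hx => ((hFd x hx).sub (hvd x hx).hasFDerivAt).differentiableAt)
      (fun x hx => ?_) hx₀
    have h := ((hFd x hx).sub (hvd x hx).hasFDerivAt).fderiv
    exact h.trans (sub_self _)
  set c : ℝ := u x₀ * (F x₀)⁻¹ with hcdef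
  set c₁ : ℝ := F x₀ - v x₀ with hc₁def
  have huval : ∀ x ∈ Ω, u x = c * v x + c * c₁ := by
    intro x hx
    have h1 : u x = c * F x := by
      have h : u x * (F x)⁻¹ = c := hqconst x hx
      field_simp [hF0 x] at h
      linarith
    have h2 : F x = v x + c₁ := by have := hgconst x hx; linarith
    rw [h1, h2]; ring
  refine ⟨⟨c, c * c₁, huval⟩, ?_⟩
  intro hu2 hv2 x hx
  -- first derivatives agree on Ω
  have hfd : ∀ y ∈ Ω, fderiv ℝ u y = c • fderiv ℝ v y := by
    intro y hy
    have hev : (fun z => c * v z + c * c₁) =ᶠ[nhds y] u :=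
      Filter.eventuallyEq_of_mem (hΩ.mem_nhds hy) (fun z hz => (huval z hz).symm)
    rw [← hev.fderiv_eq, fderiv_add_const, fderiv_const_mul (hvd y hy) c]
  -- second derivative directional terms
  have hlap : lap u x = c * lap v x := by
    unfold lap
    rw [Finset.mul_sum]
    refine Finset.sum_congr rfl (fun i _ => ?_)
    set e : EuclideanSpace ℝ (Fin N) := EuclideanSpace.single i 1 with hedef
    have hev : (fun y => fderiv ℝ u y e) =ᶠ[nhds x] (fun y => c * fderiv ℝ v y e) :=
      Filter.eventuallyEq_of_mem (hΩ.mem_nhds hx)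
        (fun y hy => by rw [hfd y hy]; simp)
    have hdfv : DifferentiableAt ℝ (fderiv ℝ v) x :=
      (((hv2 x hx).contDiffAt (hΩ.mem_nhds hx)).fderiv_right
        (by norm_num : (1:WithTop ℕ∞) + 1 ≤ 2)).differentiableAt one_ne_zero
    have hdv : DifferentiableAt ℝ (fun y => fderiv ℝ v y e) x := by
      have := ((ContinuousLinearMap.apply ℝ ℝ e).differentiable.differentiableAt).comp x hdfv
      exact this
    rw [hev.fderiv_eq, fderiv_const_mul hdv c]
    simp
  have h2 : F x = v x + c₁ := by have := hgconst x hx; linarith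
  rw [hf1 x hx, hlap, huval x hx]
  show F x * (c * lap v x) = (c * v x + c * c₁) * 1 * lap v x
  rw [h2]; ring
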